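/- Let X be a semitopological group whose topology makes X a Baire space. If A ⊆ X is co-meagre (its complement is meagre) and {z_n}_{n∈ℕ} is a sequence in X converging to the identity 1_X, then there is a dense G_δ set H ⊆ A such that for every a ∈ H and every n ∈ ℕ, a·z_n ∈ A. -/
import Mathlib

open Filter Topology

/-- **Theorem 1.** In a Baire semitopological group `X`, if `A` is co-meagre and
`z_n → 1_X` is a null sequence, then there is a dense `G_δ` set `H ⊆ A` such that
`a * z_n ∈ A` for all `a ∈ H` and all `n`. -/
theorem theorem1_KBD_comeagre
    {X : Type*} [Group X] [TopologicalSpace X] [BaireSpace X]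
    (hleft : ∀ g : X, Continuous fun x => g * x)
    (hright : ∀ g : X, Continuous fun x => x * g)
    (A : Set X) (hA : IsMeagre Aᶜ)
    (z : ℕ → X) (hz : Tendsto z atTop (𝓝 1)) :
    ∃ H : Set X, H ⊆ A ∧ Dense H ∧ IsGδ H ∧
      ∀ a ∈ H, ∀ n : ℕ, a * z n ∈ A := by
  have hAres : A ∈ residual X := by
    have := hA
    rwa [IsMeagre, compl_compl] at this
  have homeo : ∀ g : X, IsOpenMap fun x : X => x * g := by
    intro g
    exact Homeomorph.isOpenMap
      { toEquiv := Equiv.mulRight g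
        continuous_toFun := hright g
        continuous_invFun := hright g⁻¹ }
  have hB : (A ∩ ⋂ n, (fun x => x * z n) ⁻¹' A) ∈ residual X := by
    refine Filter.inter_mem hAres ?_
    refine countable_iInter_mem.mpr fun n => ?_
    exact tendsto_residual_of_isOpenMap (hright (z n)) (homeo (z n)) hAres
  rcases mem_residual.1 hB with ⟨H, hHsub, hGδ, hdense⟩
  refine ⟨H, fun x hx => (hHsub hx).1, hdense, hGδ, fun a ha n => ?_⟩
  exact Set.mem_iInter.1 (hHsub ha).2 n
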